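/- arXiv:2204.00864 — 5 statements merged into one kernel-verified Lean document; each statement's English description precedes it below -/
import Mathlib

section
/- For any bounded operator a on a separable Hilbert space H with orthonormal basis {E_k}_{k≥0}, and the diagonal operator K defined by K E_k = k E_k, the operator norm ‖a(I+K)^N‖ is at most the Hilbert–Schmidt norm ‖a(I+K)^N‖_HS, which in turn is at most √(π²/6) · ‖a(I+K)^{N+1}‖. -/
open scoped ENNReal ComplexConjugate InnerProductSpace

noncomputable section

abbrev H : Type := lp (fun _ : ℕ => ℂ) 2

/-- The standard orthonormal basis vectors of `ℓ²(ℕ)`. -/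
def e (k : ℕ) : H := lp.single 2 k 1

/-- Matrix coefficients of a bounded operator. -/
def matA (a : H →L[ℂ] H) (k l : ℕ) : ℂ := ⟪e k, a (e l)⟫_ℂ

/-- Operator norm (possibly infinite) of a matrix, as the sup of bilinear pairings
against finitely supported vectors of norm at most one. -/
def opNormE (A : ℕ → ℕ → ℂ) : ℝ≥0∞ :=
  ⨆ (x : ℕ →₀ ℂ) (y : ℕ →₀ ℂ)
    (_ : ∑ l ∈ x.support, ‖x l‖ ^ 2 ≤ 1)
    (_ : ∑ k ∈ y.support, ‖y k‖ ^ 2 ≤ 1),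
    ENNReal.ofReal ‖∑ k ∈ y.support, ∑ l ∈ x.support, conj (y k) * A k l * x l‖

/-- Hilbert-Schmidt norm (possibly infinite) of a matrix. -/
def hsNormE (A : ℕ → ℕ → ℂ) : ℝ≥0∞ :=
  (∑' k : ℕ, ∑' l : ℕ, (‖A k l‖₊ : ℝ≥0∞) ^ 2) ^ ((1 : ℝ) / 2)

/-- The matrix of `a * (I + K)^N`, where `K` is the label operator `K E_k = k E_k`. -/
def wt (N : ℕ) (A : ℕ → ℕ → ℂ) : ℕ → ℕ → ℂ := fun k l => (1 + (l : ℂ)) ^ N * A k l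

/-- `‖a‖_{0,N} = ‖a (I+K)^N‖`. -/
def norm0N (A : ℕ → ℕ → ℂ) (N : ℕ) : ℝ≥0∞ := opNormE (wt N A)

/-- The matrix of `δ_K(a) = [K, a]`. -/
def deltaK (A : ℕ → ℕ → ℂ) : ℕ → ℕ → ℂ := fun k l => ((k : ℂ) - (l : ℂ)) * A k l

/-- `‖a‖_{M,N} = ∑_{j=0}^M C(M,j) ‖δ_K^j(a)‖_{0,N}`. -/
def normMN (A : ℕ → ℕ → ℂ) (M N : ℕ) : ℝ≥0∞ :=
  ∑ j ∈ Finset.range (M + 1), (Nat.choose M j : ℝ≥0∞) * norm0N (deltaK^[j] A) N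

/-- Rapid decay of a matrix: the smooth compact operators `K^∞` are the operators
whose matrix has this property. -/
def IsRD (A : ℕ → ℕ → ℂ) : Prop :=
  ∀ M N : ℕ, ∃ C : ℝ, ∀ k l : ℕ, (1 + (k : ℝ)) ^ M * (1 + (l : ℝ)) ^ N * ‖A k l‖ ≤ C

/-- The operator norm of a matrix is bounded by its Hilbert-Schmidt norm. -/
theorem aux_op_le_hs (A : ℕ → ℕ → ℂ) : opNormE A ≤ hsNormE A := by
  refine iSup_le fun x => iSup_le fun y => iSup_le fun hx => iSup_le fun hy => ?_
  set T := ∑' k : ℕ, ∑' l : ℕ, (‖A k l‖₊ : ℝ≥0∞) ^ 2 with hT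
  set u : ℝ := ∑ k ∈ y.support, ∑ l ∈ x.support, ‖A k l‖ ^ 2 with hu
  have hu0 : 0 ≤ u := Finset.sum_nonneg fun _ _ => Finset.sum_nonneg fun _ _ => sq_nonneg _
  -- real Cauchy-Schwarz bound
  have hbound : ‖∑ k ∈ y.support, ∑ l ∈ x.support, conj (y k) * A k l * x l‖ ≤ Real.sqrt u := by
    have h1 : ‖∑ k ∈ y.support, ∑ l ∈ x.support, conj (y k) * A k l * x l‖
        ≤ ∑ p ∈ y.support ×ˢ x.support, (‖y p.1‖ * ‖x p.2‖) * ‖A p.1 p.2‖ := by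
      rw [Finset.sum_product]
      refine (norm_sum_le _ _).trans (Finset.sum_le_sum fun k _ => ?_)
      refine (norm_sum_le _ _).trans (Finset.sum_le_sum fun l _ => ?_)
      rw [norm_mul, norm_mul, RCLike.norm_conj]
      ring_nf; exact le_refl _
    have h2 : (∑ p ∈ y.support ×ˢ x.support, (‖y p.1‖ * ‖x p.2‖) * ‖A p.1 p.2‖) ^ 2
        ≤ (∑ p ∈ y.support ×ˢ x.support, (‖y p.1‖ * ‖x p.2‖) ^ 2)
          * ∑ p ∈ y.support ×ˢ x.support, ‖A p.1 p.2‖ ^ 2 :=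
      Finset.sum_mul_sq_le_sq_mul_sq _ _ _
    have h3 : (∑ p ∈ y.support ×ˢ x.support, (‖y p.1‖ * ‖x p.2‖) ^ 2) ≤ 1 := by
      have : (∑ p ∈ y.support ×ˢ x.support, (‖y p.1‖ * ‖x p.2‖) ^ 2)
          = (∑ k ∈ y.support, ‖y k‖ ^ 2) * ∑ l ∈ x.support, ‖x l‖ ^ 2 := by
        rw [Finset.sum_mul_sum, Finset.sum_product]
        exact Finset.sum_congr rfl fun k _ => Finset.sum_congr rfl fun l _ => by ring
      rw [this]
      exact mul_le_one₀ hy (Finset.sum_nonneg fun _ _ => sq_nonneg _) hx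
    have h4 : (∑ p ∈ y.support ×ˢ x.support, ‖A p.1 p.2‖ ^ 2) = u := by
      rw [hu, Finset.sum_product]
    have h5 : (∑ p ∈ y.support ×ˢ x.support, (‖y p.1‖ * ‖x p.2‖) * ‖A p.1 p.2‖) ^ 2 ≤ u := by
      calc _ ≤ _ := h2
        _ ≤ 1 * u := by
            rw [h4]; exact mul_le_mul_of_nonneg_right h3 hu0
        _ = u := one_mul u
    have h6 : ∑ p ∈ y.support ×ˢ x.support, (‖y p.1‖ * ‖x p.2‖) * ‖A p.1 p.2‖ ≤ Real.sqrt u := by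
      have := Real.sqrt_le_sqrt h5
      rwa [Real.sqrt_sq (Finset.sum_nonneg fun _ _ => by positivity)] at this
    exact h1.trans h6
  -- pass to ENNReal
  have hTu : ENNReal.ofReal u ≤ T := by
    have : ENNReal.ofReal u = ∑ k ∈ y.support, ∑ l ∈ x.support, (‖A k l‖₊ : ℝ≥0∞) ^ 2 := by
      rw [hu, ENNReal.ofReal_sum_of_nonneg (fun _ _ => Finset.sum_nonneg fun _ _ => sq_nonneg _)]
      refine Finset.sum_congr rfl fun k _ => ?_
      rw [ENNReal.ofReal_sum_of_nonneg (fun _ _ => sq_nonneg _)]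
      refine Finset.sum_congr rfl fun l _ => ?_
      rw [ENNReal.ofReal_pow (norm_nonneg _), ofReal_norm, enorm_eq_nnnorm]
    rw [this]
    calc ∑ k ∈ y.support, ∑ l ∈ x.support, (‖A k l‖₊ : ℝ≥0∞) ^ 2
        ≤ ∑ k ∈ y.support, ∑' l : ℕ, (‖A k l‖₊ : ℝ≥0∞) ^ 2 :=
          Finset.sum_le_sum fun k _ => ENNReal.sum_le_tsum _
      _ ≤ T := ENNReal.sum_le_tsum _
  calc ENNReal.ofReal ‖∑ k ∈ y.support, ∑ l ∈ x.support, conj (y k) * A k l * x l‖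
      ≤ ENNReal.ofReal (Real.sqrt u) := ENNReal.ofReal_le_ofReal hbound
    _ = (ENNReal.ofReal u) ^ ((1:ℝ)/2) := by
        rw [Real.sqrt_eq_rpow, ENNReal.ofReal_rpow_of_nonneg hu0 (by norm_num)]
    _ ≤ T ^ ((1:ℝ)/2) := ENNReal.rpow_le_rpow hTu (by norm_num)

/-- Each column of a matrix has `ℓ²`-norm bounded by the operator norm. -/
theorem aux_col (B : ℕ → ℕ → ℂ) (l : ℕ) :
    ∑' k : ℕ, (‖B k l‖₊ : ℝ≥0∞) ^ 2 ≤ (opNormE B) ^ 2 := by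
  rw [ENNReal.tsum_eq_iSup_sum]
  refine iSup_le fun S => ?_
  set u : ℝ := ∑ k ∈ S, ‖B k l‖ ^ 2 with hu
  have hu0 : 0 ≤ u := Finset.sum_nonneg fun _ _ => sq_nonneg _
  have hSu : ∑ k ∈ S, (‖B k l‖₊ : ℝ≥0∞) ^ 2 = ENNReal.ofReal u := by
    rw [hu, ENNReal.ofReal_sum_of_nonneg (fun _ _ => sq_nonneg _)]
    exact Finset.sum_congr rfl fun k _ => by
      rw [ENNReal.ofReal_pow (norm_nonneg _), ofReal_norm, enorm_eq_nnnorm]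
  rw [hSu]
  rcases eq_or_lt_of_le hu0 with h0 | hpos
  · simp [← h0]
  set s : ℝ := Real.sqrt u with hs
  have hspos : 0 < s := Real.sqrt_pos.mpr hpos
  have hs2 : s * s = u := Real.mul_self_sqrt hu0
  set x : ℕ →₀ ℂ := Finsupp.single l 1 with hxdef
  set y : ℕ →₀ ℂ := Finsupp.onFinset S (fun k => if k ∈ S then B k l / s else 0)
    (fun k hk => by by_contra h; simp [h] at hk) with hydef
  have hxsupp : x.support = {l} := Finsupp.support_single_ne_zero l one_ne_zero
  have hx : ∑ l' ∈ x.support, ‖x l'‖ ^ 2 ≤ 1 := by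
    rw [hxsupp]; simp [hxdef]
  have hysupp : y.support ⊆ S := Finsupp.support_onFinset_subset
  have hyval : ∀ k ∈ S, y k = B k l / s := fun k hk => by simp [hydef, hk]
  have hy : ∑ k ∈ y.support, ‖y k‖ ^ 2 ≤ 1 := by
    have h1 : ∑ k ∈ y.support, ‖y k‖ ^ 2 ≤ ∑ k ∈ S, ‖y k‖ ^ 2 :=
      Finset.sum_le_sum_of_subset_of_nonneg hysupp (fun _ _ _ => sq_nonneg _)
    have h2 : ∑ k ∈ S, ‖y k‖ ^ 2 = u / (s * s) := by
      rw [Finset.sum_div]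
      refine Finset.sum_congr rfl fun k hk => ?_
      rw [hyval k hk, norm_div, div_pow, Complex.norm_real,
        Real.norm_eq_abs, abs_of_nonneg hspos.le]
      ring
    rw [hs2, div_self (ne_of_gt hpos)] at h2
    exact h1.trans (le_of_eq h2)
  -- value of the pairing
  have hpair : ∑ k ∈ y.support, ∑ l' ∈ x.support, conj (y k) * B k l' * x l'
      = ((u / s : ℝ) : ℂ) := by
    rw [hxsupp]
    simp only [Finset.sum_singleton, hxdef, Finsupp.single_eq_same, mul_one]
    have hterm : ∀ k ∈ S, conj (y k) * B k l = ((‖B k l‖ ^ 2 / s : ℝ) : ℂ) := by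
      intro k hk
      rw [hyval k hk]
      rw [map_div₀, Complex.conj_ofReal, div_mul_eq_mul_div, RCLike.conj_mul]
      rw [Complex.ofReal_div, Complex.ofReal_pow]; rfl
    have : ∑ k ∈ y.support, conj (y k) * B k l = ∑ k ∈ S, conj (y k) * B k l := by
      refine Finset.sum_subset hysupp fun k hk hk' => ?_
      simp [Finsupp.notMem_support_iff.mp hk']
    rw [this, Finset.sum_congr rfl hterm, ← Complex.ofReal_sum, ← Finset.sum_div]
  have hnorm : ‖∑ k ∈ y.support, ∑ l' ∈ x.support, conj (y k) * B k l' * x l'‖ = s := by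
    rw [hpair, Complex.norm_real, Real.norm_eq_abs, abs_of_nonneg (by positivity)]
    rw [← hs2]; field_simp
  have hle : ENNReal.ofReal s ≤ opNormE B := by
    rw [← hnorm]
    exact le_iSup_of_le x (le_iSup_of_le y (le_iSup_of_le hx (le_iSup_of_le hy le_rfl)))
  calc ENNReal.ofReal u = ENNReal.ofReal s * ENNReal.ofReal s := by
        rw [← ENNReal.ofReal_mul hspos.le, hs2]
    _ ≤ opNormE B * opNormE B := mul_le_mul' hle hle
    _ = opNormE B ^ 2 := (sq _).symm

/-- The Basel sum in `ℝ≥0∞`. -/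
theorem aux_basel : ∑' l : ℕ, (((l + 1 : ℕ) : ℝ≥0∞))⁻¹ ^ 2
    = ENNReal.ofReal (Real.pi ^ 2 / 6) := by
  have hsum : HasSum (fun l : ℕ => 1 / ((l : ℝ) + 1) ^ 2) (Real.pi ^ 2 / 6) := by
    have h := (hasSum_nat_add_iff' (f := fun n : ℕ => (1 : ℝ) / (n : ℝ) ^ 2) 1).mpr
      hasSum_zeta_two
    simpa using h
  have h1 : ∀ l : ℕ, (((l + 1 : ℕ) : ℝ≥0∞))⁻¹ ^ 2
      = ENNReal.ofReal (1 / ((l : ℝ) + 1) ^ 2) := by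
    intro l
    rw [one_div, ENNReal.ofReal_inv_of_pos (by positivity), ← ENNReal.inv_pow]
    congr 1
    rw [ENNReal.ofReal_pow (by positivity)]
    congr 1
    rw [show ((l : ℝ) + 1) = ((l + 1 : ℕ) : ℝ) by push_cast; ring, ENNReal.ofReal_natCast]
  rw [tsum_congr h1, ← ENNReal.ofReal_tsum_of_nonneg (fun l => by positivity) hsum.summable,
    hsum.tsum_eq]

/-- Pointwise relation between the weighted matrices. -/
theorem aux_pt (A : ℕ → ℕ → ℂ) (N k l : ℕ) :
    (‖wt N A k l‖₊ : ℝ≥0∞) ^ 2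
      = (((l + 1 : ℕ) : ℝ≥0∞))⁻¹ ^ 2 * (‖wt (N + 1) A k l‖₊ : ℝ≥0∞) ^ 2 := by
  have hrel : wt (N + 1) A k l = ((l + 1 : ℕ) : ℂ) * wt N A k l := by
    simp only [wt, pow_succ]
    push_cast
    ring
  have hne : (((l + 1 : ℕ) : ℝ≥0∞)) ≠ 0 := by
    simp
  have hnt : (((l + 1 : ℕ) : ℝ≥0∞)) ≠ ⊤ := by
    simp
  have hnn : ((‖((l + 1 : ℕ) : ℂ)‖₊ : NNReal) : ℝ≥0∞) = ((l + 1 : ℕ) : ℝ≥0∞) := by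
    rw [RCLike.nnnorm_natCast]
    norm_cast
  rw [hrel, nnnorm_mul, ENNReal.coe_mul, hnn, mul_pow, ← mul_assoc, ← mul_pow,
    ENNReal.inv_mul_cancel hne hnt, one_pow, one_mul]

/-- `‖a(I+K)^N‖_HS ≤ √(π²/6) ⬝ ‖a(I+K)^{N+1}‖`. -/
theorem aux_hs_le (A : ℕ → ℕ → ℂ) (N : ℕ) :
    hsNormE (wt N A) ≤
      ENNReal.ofReal (Real.sqrt (Real.pi ^ 2 / 6)) * opNormE (wt (N + 1) A) := by
  set P := opNormE (wt (N + 1) A) with hP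
  have key : ∑' k : ℕ, ∑' l : ℕ, (‖wt N A k l‖₊ : ℝ≥0∞) ^ 2
      ≤ ENNReal.ofReal (Real.pi ^ 2 / 6) * P ^ 2 := by
    rw [ENNReal.tsum_comm]
    calc ∑' l : ℕ, ∑' k : ℕ, (‖wt N A k l‖₊ : ℝ≥0∞) ^ 2
        = ∑' l : ℕ, (((l + 1 : ℕ) : ℝ≥0∞))⁻¹ ^ 2
            * ∑' k : ℕ, (‖wt (N + 1) A k l‖₊ : ℝ≥0∞) ^ 2 := by
          refine tsum_congr fun l => ?_
          rw [← ENNReal.tsum_mul_left]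
          exact tsum_congr fun k => aux_pt A N k l
      _ ≤ ∑' l : ℕ, (((l + 1 : ℕ) : ℝ≥0∞))⁻¹ ^ 2 * P ^ 2 :=
          ENNReal.tsum_le_tsum fun l => mul_le_mul_right (aux_col _ l) _
      _ = (∑' l : ℕ, (((l + 1 : ℕ) : ℝ≥0∞))⁻¹ ^ 2) * P ^ 2 := ENNReal.tsum_mul_right
      _ = ENNReal.ofReal (Real.pi ^ 2 / 6) * P ^ 2 := by rw [aux_basel]
  calc hsNormE (wt N A)
      ≤ (ENNReal.ofReal (Real.pi ^ 2 / 6) * P ^ 2) ^ ((1 : ℝ) / 2) :=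
        ENNReal.rpow_le_rpow key (by norm_num)
    _ = ENNReal.ofReal (Real.sqrt (Real.pi ^ 2 / 6)) * P := by
        rw [ENNReal.mul_rpow_of_nonneg _ _ (by norm_num)]
        congr 1
        · rw [Real.sqrt_eq_rpow, ← ENNReal.ofReal_rpow_of_nonneg (by positivity) (by norm_num)]
        · rw [← ENNReal.rpow_natCast P 2, ← ENNReal.rpow_mul]
          norm_num

/-- For a bounded operator `a` on `ℓ²(ℕ)` and the label operator `K E_k = k E_k`:
`‖a(I+K)^N‖ ≤ ‖a(I+K)^N‖_HS ≤ √(π²/6) ⬝ ‖a(I+K)^{N+1}‖`, all values in `[0,∞]`. -/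
theorem stmt0 (a : H →L[ℂ] H) (N : ℕ) :
    opNormE (wt N (matA a)) ≤ hsNormE (wt N (matA a)) ∧
    hsNormE (wt N (matA a)) ≤
      ENNReal.ofReal (Real.sqrt (Real.pi ^ 2 / 6)) * opNormE (wt (N + 1) (matA a)) := by
  exact ⟨aux_op_le_hs _, aux_hs_le _ N⟩

end
end

section
/- For bounded operators a, b on H the M,N-norms are submultiplicative in the sense that ‖ab‖_{M,N} ≤ ‖a‖_{M,0} ‖b‖_{M,N} ≤ ‖a‖_{M,N} ‖b‖_{M,N}. -/
open scoped ENNReal ComplexConjugate InnerProductSpace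

noncomputable section

lemma one_add_pow_ne (l N : ℕ) : (1 + (l : ℂ)) ^ N ≠ 0 := by
  apply pow_ne_zero
  have : ((1 + l : ℕ) : ℂ) ≠ 0 := Nat.cast_ne_zero.mpr (by omega)
  simpa using this

lemma norm_one_add_pow_ge (l N : ℕ) : (1 : ℝ) ≤ ‖(1 + (l : ℂ)) ^ N‖ := by
  rw [norm_pow]
  apply one_le_pow₀
  have : ((1 + l : ℕ) : ℂ) = 1 + (l : ℂ) := by push_cast; ring
  rw [← this, Complex.norm_natCast]
  exact_mod_cast Nat.one_le_iff_ne_zero.mpr (by omega)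

def pairSum (A : ℕ → ℕ → ℂ) (x y : ℕ →₀ ℂ) : ℂ :=
  ∑ k ∈ y.support, ∑ l ∈ x.support, conj (y k) * A k l * x l

lemma deltaK_iter (A : ℕ → ℕ → ℂ) (j k l : ℕ) :
    deltaK^[j] A k l = ((k : ℂ) - (l : ℂ)) ^ j * A k l := by
  induction j with
  | zero => simp
  | succ n ih => rw [Function.iterate_succ_apply', deltaK, ih]; ring

lemma le_opNormE (A : ℕ → ℕ → ℂ) (x y : ℕ →₀ ℂ)
    (hx : ∑ l ∈ x.support, ‖x l‖ ^ 2 ≤ 1) (hy : ∑ k ∈ y.support, ‖y k‖ ^ 2 ≤ 1) :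
    ENNReal.ofReal ‖pairSum A x y‖ ≤ opNormE A := by
  rw [opNormE]
  exact le_iSup_of_le x (le_iSup_of_le y (le_iSup_of_le hx (le_iSup_of_le hy le_rfl)))

lemma opNormE_le_iff (A : ℕ → ℕ → ℂ) (c : ℝ≥0∞) :
    opNormE A ≤ c ↔ ∀ (x y : ℕ →₀ ℂ),
      (∑ l ∈ x.support, ‖x l‖ ^ 2 ≤ 1) → (∑ k ∈ y.support, ‖y k‖ ^ 2 ≤ 1) →
      ENNReal.ofReal ‖pairSum A x y‖ ≤ c := by
  rw [opNormE]
  simp only [iSup_le_iff]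
  rfl

lemma pairSum_le_toReal (A : ℕ → ℕ → ℂ) (hA : opNormE A ≠ ⊤) (x y : ℕ →₀ ℂ)
    (hx : ∑ l ∈ x.support, ‖x l‖ ^ 2 ≤ 1) (hy : ∑ k ∈ y.support, ‖y k‖ ^ 2 ≤ 1) :
    ‖pairSum A x y‖ ≤ (opNormE A).toReal := by
  have := le_opNormE A x y hx hy
  exact (ENNReal.ofReal_le_iff_le_toReal hA).mp this

lemma opNormE_zero : opNormE (fun _ _ => (0 : ℂ)) = 0 := by
  rw [← le_zero_iff, opNormE_le_iff]
  intro x y _ _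
  simp [pairSum]

lemma mat_eq_zero_of_opNormE_zero (A : ℕ → ℕ → ℂ) (h : opNormE A = 0) :
    ∀ k l, A k l = 0 := by
  intro k l
  have h1 := le_opNormE A (Finsupp.single l 1) (Finsupp.single k 1) ?_ ?_
  · rw [h, le_zero_iff, ENNReal.ofReal_eq_zero] at h1
    have hp : pairSum A (Finsupp.single l 1) (Finsupp.single k 1) = A k l := by
      rw [pairSum, Finsupp.support_single_ne_zero _ one_ne_zero,
        Finsupp.support_single_ne_zero _ one_ne_zero]
      simp
    rw [hp] at h1
    exact norm_le_zero_iff.mp h1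
  · rw [Finsupp.support_single_ne_zero _ one_ne_zero]; simp
  · rw [Finsupp.support_single_ne_zero _ one_ne_zero]; simp

lemma dual_l2 (u : ℕ → ℂ) (C : ℝ) (hC : 0 ≤ C)
    (h : ∀ x : ℕ →₀ ℂ, ∑ l ∈ x.support, ‖x l‖ ^ 2 ≤ 1 →
      ‖∑ l ∈ x.support, u l * x l‖ ≤ C) :
    ∀ s : Finset ℕ, ∑ m ∈ s, ‖u m‖ ^ 2 ≤ C ^ 2 := by
  intro s
  set r : ℝ := Real.sqrt (∑ m ∈ s, ‖u m‖ ^ 2) with hr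
  have hsum_nonneg : 0 ≤ ∑ m ∈ s, ‖u m‖ ^ 2 :=
    Finset.sum_nonneg fun _ _ => sq_nonneg _
  rcases eq_or_lt_of_le hsum_nonneg with h0 | hpos
  · rw [← h0]; positivity
  have hrpos : 0 < r := Real.sqrt_pos.mpr hpos
  have hr2 : r ^ 2 = ∑ m ∈ s, ‖u m‖ ^ 2 := Real.sq_sqrt hsum_nonneg
  -- test vector
  set f : ℕ → ℂ := fun l => if l ∈ s then (r : ℂ)⁻¹ * conj (u l) else 0 with hf
  have hfs : ∀ l, f l ≠ 0 → l ∈ s := by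
    intro l hl
    by_contra hls
    exact hl (by simp [hf, hls])
  set x : ℕ →₀ ℂ := Finsupp.onFinset s f hfs with hx
  have hxval : ∀ l ∈ s, x l = (r : ℂ)⁻¹ * conj (u l) := by
    intro l hl; simp [hx, Finsupp.onFinset_apply, hf, hl]
  have hsupp : x.support ⊆ s := Finsupp.support_onFinset_subset
  have hzero : ∀ l ∈ s, l ∉ x.support → x l = 0 := by
    intro l _ hl; exact Finsupp.notMem_support_iff.mp hl
  -- norm of x
  have hnorm : ∑ l ∈ x.support, ‖x l‖ ^ 2 ≤ 1 := by
    have hext : ∑ l ∈ x.support, ‖x l‖ ^ 2 = ∑ l ∈ s, ‖x l‖ ^ 2 :=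
      Finset.sum_subset hsupp (by intro l hl hls; rw [hzero l hl hls]; simp)
    rw [hext]
    have : ∀ l ∈ s, ‖x l‖ ^ 2 = ‖u l‖ ^ 2 / r ^ 2 := by
      intro l hl
      rw [hxval l hl, norm_mul, norm_inv, Complex.norm_real, Real.norm_eq_abs,
        abs_of_pos hrpos, RCLike.norm_conj]
      field_simp
    rw [Finset.sum_congr rfl this, ← Finset.sum_div, ← hr2,
      div_self (pow_ne_zero 2 hrpos.ne')]
  -- pairing value
  have hpair : ∑ l ∈ x.support, u l * x l = (r : ℂ)⁻¹ * (∑ m ∈ s, ‖u m‖ ^ 2 : ℝ) := by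
    have hext : ∑ l ∈ x.support, u l * x l = ∑ l ∈ s, u l * x l :=
      Finset.sum_subset hsupp (by intro l hl hls; rw [hzero l hl hls]; simp)
    rw [hext]
    have : ∀ l ∈ s, u l * x l = (r : ℂ)⁻¹ * (‖u l‖ ^ 2 : ℝ) := by
      intro l hl
      rw [hxval l hl]
      rw [show u l * ((r : ℂ)⁻¹ * conj (u l)) = (r : ℂ)⁻¹ * (u l * conj (u l)) by ring,
        Complex.mul_conj]
      rw [Complex.normSq_eq_norm_sq]
      all_goals norm_cast
    rw [Finset.sum_congr rfl this, ← Finset.mul_sum]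
    push_cast
    rfl
  have hb := h x hnorm
  rw [hpair] at hb
  have hnv : ‖(r : ℂ)⁻¹ * ((∑ m ∈ s, ‖u m‖ ^ 2 : ℝ) : ℂ)‖ = r := by
    rw [norm_mul, norm_inv, Complex.norm_real, Complex.norm_real, Real.norm_eq_abs,
      Real.norm_eq_abs, abs_of_pos hrpos, abs_of_nonneg hsum_nonneg, ← hr2, sq,
      inv_mul_cancel_left₀ hrpos.ne']
  rw [hnv] at hb
  rw [← hr2]
  exact pow_le_pow_left₀ hrpos.le hb 2

lemma cs_tsum (u v : ℕ → ℂ) (C D : ℝ) (hC : 0 ≤ C) (hD : 0 ≤ D)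
    (hu : ∀ s : Finset ℕ, ∑ m ∈ s, ‖u m‖ ^ 2 ≤ C ^ 2)
    (hv : ∀ s : Finset ℕ, ∑ m ∈ s, ‖v m‖ ^ 2 ≤ D ^ 2) :
    Summable (fun m => u m * v m) ∧ ‖∑' m, u m * v m‖ ≤ C * D := by
  have hbound : ∀ s : Finset ℕ, ∑ m ∈ s, ‖u m * v m‖ ≤ C * D := by
    intro s
    have h1 : (∑ m ∈ s, ‖u m‖ * ‖v m‖) ^ 2
        ≤ (∑ m ∈ s, ‖u m‖ ^ 2) * (∑ m ∈ s, ‖v m‖ ^ 2) :=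
      Finset.sum_mul_sq_le_sq_mul_sq s _ _
    have h2 : (∑ m ∈ s, ‖u m‖ * ‖v m‖) ^ 2 ≤ (C * D) ^ 2 := by
      calc (∑ m ∈ s, ‖u m‖ * ‖v m‖) ^ 2
          ≤ (∑ m ∈ s, ‖u m‖ ^ 2) * (∑ m ∈ s, ‖v m‖ ^ 2) := h1
        _ ≤ C ^ 2 * D ^ 2 := by
            apply mul_le_mul (hu s) (hv s)
              (Finset.sum_nonneg fun _ _ => sq_nonneg _) (sq_nonneg _)
        _ = (C * D) ^ 2 := by ring
    have h3 : 0 ≤ ∑ m ∈ s, ‖u m‖ * ‖v m‖ :=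
      Finset.sum_nonneg fun _ _ => mul_nonneg (norm_nonneg _) (norm_nonneg _)
    calc ∑ m ∈ s, ‖u m * v m‖ = ∑ m ∈ s, ‖u m‖ * ‖v m‖ := by
          simp [norm_mul]
      _ ≤ C * D := by nlinarith [h2, h3, mul_nonneg hC hD]
  have hsn : Summable fun m => ‖u m * v m‖ :=
    summable_of_sum_le (fun m => norm_nonneg _) hbound
  have hs : Summable fun m => u m * v m := hsn.of_norm
  refine ⟨hs, ?_⟩
  calc ‖∑' m, u m * v m‖ ≤ ∑' m, ‖u m * v m‖ := norm_tsum_le_tsum_norm hsn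
    _ ≤ C * D := Summable.tsum_le_of_sum_le hsn hbound

lemma matA_comp_hasSum (a b : H →L[ℂ] H) (k l : ℕ) :
    HasSum (fun m => matA a k m * matA b m l) (matA (a ∘L b) k l) := by
  have h0 : HasSum (fun m : ℕ => lp.single 2 m ((b (e l) : ∀ _ : ℕ, ℂ) m)) (b (e l)) :=
    lp.hasSum_single (by norm_num) (b (e l))
  have h1 := ((innerSL ℂ (e k)).comp a).hasSum h0
  simp only [ContinuousLinearMap.coe_comp', Function.comp_apply, innerSL_apply_apply] at h1
  have key : ∀ m : ℕ, ⟪e k, a (lp.single 2 m ((b (e l) : ∀ _ : ℕ, ℂ) m))⟫_ℂ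
      = matA a k m * matA b m l := by
    intro m
    have hs : ∀ c : ℂ, lp.single 2 m c = c • e m := by
      intro c
      calc lp.single 2 m c = lp.single 2 m (c • (1 : ℂ)) := by rw [smul_eq_mul, mul_one]
        _ = c • e m := lp.single_smul (E := fun _ : ℕ => ℂ) (𝕜 := ℂ) 2 m c (1 : ℂ)
    rw [hs, map_smul, inner_smul_right]
    have hb : matA b m l = (b (e l) : ∀ _ : ℕ, ℂ) m := by
      rw [matA, e, lp.inner_single_left]; simp
    rw [hb, matA]; ring
  simp only [key] at h1
  exact h1

lemma opNormE_le_wt (A : ℕ → ℕ → ℂ) (N : ℕ) : opNormE A ≤ opNormE (wt N A) := by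
  rw [opNormE_le_iff]
  intro x y hx hy
  set f : ℕ → ℂ := fun l => ((1 + (l : ℂ)) ^ N)⁻¹ * x l with hf
  have hfs : ∀ l, f l ≠ 0 → l ∈ x.support := by
    intro l hl
    rw [Finsupp.mem_support_iff]
    intro hx0
    exact hl (by simp [hf, hx0])
  set x' : ℕ →₀ ℂ := Finsupp.onFinset x.support f hfs with hx'
  have hsupp : x'.support ⊆ x.support := Finsupp.support_onFinset_subset
  have hval : ∀ l, x' l = ((1 + (l : ℂ)) ^ N)⁻¹ * x l := fun l => rfl
  have hx'n : ∑ l ∈ x'.support, ‖x' l‖ ^ 2 ≤ 1 := by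
    refine le_trans ?_ hx
    rw [Finset.sum_subset hsupp (by intro l _ hl; rw [Finsupp.notMem_support_iff.mp hl]; simp)]
    apply Finset.sum_le_sum
    intro l _
    rw [hval, norm_mul]
    apply pow_le_pow_left₀ (by positivity)
    apply mul_le_of_le_one_left (norm_nonneg _)
    rw [norm_inv]
    exact inv_le_one_of_one_le₀ (norm_one_add_pow_ge l N)
  have hpair : pairSum A x y = pairSum (wt N A) x' y := by
    rw [pairSum, pairSum]
    apply Finset.sum_congr rfl
    intro k _
    rw [Finset.sum_subset hsupp (by intro l _ hl; rw [Finsupp.notMem_support_iff.mp hl]; simp)]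
    apply Finset.sum_congr rfl
    intro l _
    rw [hval, wt]
    field_simp [one_add_pow_ne l N]
  rw [hpair]
  exact le_opNormE _ _ _ hx'n hy

lemma comb_rearrange (M : ℕ) (α β : ℕ → ℝ≥0∞) :
    ∑ j ∈ Finset.range (M + 1), (Nat.choose M j : ℝ≥0∞) *
        ∑ i ∈ Finset.range (j + 1), (Nat.choose j i : ℝ≥0∞) * (α i * β (j - i))
      ≤ (∑ i ∈ Finset.range (M + 1), (Nat.choose M i : ℝ≥0∞) * α i) *
        (∑ i ∈ Finset.range (M + 1), (Nat.choose M i : ℝ≥0∞) * β i) := by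
  set F : ℕ × ℕ → ℝ≥0∞ := fun p =>
    ((Nat.choose M p.1 : ℝ≥0∞) * α p.1) * ((Nat.choose M p.2 : ℝ≥0∞) * β p.2) with hF
  -- step 1: termwise bound
  have step1 : ∑ j ∈ Finset.range (M + 1), (Nat.choose M j : ℝ≥0∞) *
      ∑ i ∈ Finset.range (j + 1), (Nat.choose j i : ℝ≥0∞) * (α i * β (j - i))
      ≤ ∑ j ∈ Finset.range (M + 1), ∑ i ∈ Finset.range (j + 1), F (i, j - i) := by
    apply Finset.sum_le_sum
    intro j hj
    have hjM : j ≤ M := Finset.mem_range_succ_iff.mp hj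
    rw [Finset.mul_sum]
    apply Finset.sum_le_sum
    intro i hi
    have hij : i ≤ j := Finset.mem_range_succ_iff.mp hi
    have hnat : Nat.choose M j * Nat.choose j i ≤ Nat.choose M i * Nat.choose M (j - i) := by
      rw [Nat.choose_mul hij]
      exact Nat.mul_le_mul_left _ (Nat.choose_le_choose (j - i) (Nat.sub_le M i))
    calc (Nat.choose M j : ℝ≥0∞) * ((Nat.choose j i : ℝ≥0∞) * (α i * β (j - i)))
        = ((Nat.choose M j * Nat.choose j i : ℕ) : ℝ≥0∞) * (α i * β (j - i)) := by
          push_cast; ring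
      _ ≤ ((Nat.choose M i * Nat.choose M (j - i) : ℕ) : ℝ≥0∞) * (α i * β (j - i)) := by
          exact mul_le_mul_left (by exact_mod_cast Nat.cast_le.mpr hnat) _
      _ = F (i, j - i) := by rw [hF]; push_cast; ring
  refine le_trans step1 ?_
  -- step 2: reindex to antidiagonals
  have step2 : ∀ j, ∑ i ∈ Finset.range (j + 1), F (i, j - i)
      = ∑ p ∈ Finset.HasAntidiagonal.antidiagonal j, F p := by
    intro j
    rw [Finset.Nat.sum_antidiagonal_eq_sum_range_succ_mk]
  simp only [step2]
  -- step 3: biUnion and subset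
  have hdisj : (↑(Finset.range (M + 1)) : Set ℕ).PairwiseDisjoint Finset.HasAntidiagonal.antidiagonal := by
    intro j1 _ j2 _ hne
    simp only [Function.onFun, Finset.disjoint_left]
    intro p hp1 hp2
    rw [Finset.HasAntidiagonal.mem_antidiagonal] at hp1 hp2
    exact hne (hp1 ▸ hp2.symm ▸ rfl)
  rw [← Finset.sum_biUnion hdisj]
  have hsub : (Finset.range (M + 1)).biUnion Finset.HasAntidiagonal.antidiagonal
      ⊆ Finset.range (M + 1) ×ˢ Finset.range (M + 1) := by
    intro p hp
    rw [Finset.mem_biUnion] at hp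
    obtain ⟨j, hj, hpj⟩ := hp
    rw [Finset.HasAntidiagonal.mem_antidiagonal] at hpj
    rw [Finset.mem_range_succ_iff] at hj
    rw [Finset.mem_product, Finset.mem_range_succ_iff, Finset.mem_range_succ_iff]
    omega
  refine le_trans (Finset.sum_le_sum_of_subset hsub) ?_
  rw [Finset.sum_product]
  rw [Finset.sum_mul_sum]

lemma key_estimate (a b : H →L[ℂ] H) (j N : ℕ)
    (hA : ∀ i, i ≤ j → norm0N (deltaK^[i] (matA a)) 0 ≠ ⊤)
    (hB : ∀ i, i ≤ j → norm0N (deltaK^[i] (matA b)) N ≠ ⊤) :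
    norm0N (deltaK^[j] (matA (a ∘L b))) N ≤
      ∑ i ∈ Finset.range (j + 1), (Nat.choose j i : ℝ≥0∞) *
        (norm0N (deltaK^[i] (matA a)) 0 * norm0N (deltaK^[j - i] (matA b)) N) := by
  rw [norm0N, opNormE_le_iff]
  intro x y hx hy
  set A := matA a with hAdef
  set B := matA b with hBdef
  set u : ℕ → ℕ → ℂ := fun i m =>
    ∑ k ∈ y.support, conj (y k) * (((k : ℂ) - m) ^ i * A k m) with hu
  set v : ℕ → ℕ → ℂ := fun i m =>
    ∑ l ∈ x.support, ((1 + (l : ℂ)) ^ N * (((m : ℂ) - l) ^ i * B m l)) * x l with hv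
  set Ci : ℕ → ℝ := fun i => (norm0N (deltaK^[i] A) 0).toReal with hCi
  set Di : ℕ → ℝ := fun i => (norm0N (deltaK^[i] B) N).toReal with hDi
  -- (α) ℓ² bound for the rows u i
  have halpha : ∀ i, i ≤ j → ∀ s : Finset ℕ, ∑ m ∈ s, ‖u i m‖ ^ 2 ≤ Ci i ^ 2 := by
    intro i hi
    apply dual_l2 _ _ ENNReal.toReal_nonneg
    intro x' hx'
    have hps : ∑ l ∈ x'.support, u i l * x' l = pairSum (wt 0 (deltaK^[i] A)) x' y := by
      rw [pairSum, Finset.sum_comm]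
      apply Finset.sum_congr rfl; intro l _
      rw [hu, Finset.sum_mul]
      apply Finset.sum_congr rfl; intro k _
      simp only [wt, deltaK_iter, pow_zero, one_mul]
    rw [hps]
    exact pairSum_le_toReal _ (hA i hi) x' y hx' hy
  -- (β) ℓ² bound for the columns v i
  have hbeta : ∀ i, i ≤ j → ∀ s : Finset ℕ, ∑ m ∈ s, ‖v i m‖ ^ 2 ≤ Di i ^ 2 := by
    intro i hi
    have h2 : ∀ s : Finset ℕ, ∑ m ∈ s, ‖(fun m => conj (v i m)) m‖ ^ 2 ≤ Di i ^ 2 := by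
      apply dual_l2 _ _ ENNReal.toReal_nonneg
      intro y' hy'
      have hps : ∑ k ∈ y'.support, conj (v i k) * y' k
          = conj (pairSum (wt N (deltaK^[i] B)) x y') := by
        rw [pairSum, map_sum]
        apply Finset.sum_congr rfl; intro k _
        rw [hv, map_sum, map_sum, Finset.sum_mul]
        apply Finset.sum_congr rfl; intro l _
        simp only [wt, deltaK_iter, map_mul]
        rw [Complex.conj_conj]
        ring
      rw [hps, RCLike.norm_conj]
      exact pairSum_le_toReal _ (hB i hi) x y' hx hy'
    intro s
    calc ∑ m ∈ s, ‖v i m‖ ^ 2 = ∑ m ∈ s, ‖conj (v i m)‖ ^ 2 := by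
          simp [RCLike.norm_conj]
      _ ≤ Di i ^ 2 := h2 s
  -- Cauchy-Schwarz bounds
  have hcs : ∀ i, i ≤ j → Summable (fun m => u i m * v (j - i) m) ∧
      ‖∑' m, u i m * v (j - i) m‖ ≤ Ci i * Di (j - i) := fun i hi =>
    cs_tsum _ _ _ _ ENNReal.toReal_nonneg ENNReal.toReal_nonneg (halpha i hi)
      (hbeta (j - i) (Nat.sub_le j i))
  -- constants
  set cst : ℕ × ℕ → ℂ := fun p =>
    conj (y p.1) * (1 + (p.2 : ℂ)) ^ N * ((p.1 : ℂ) - p.2) ^ j * x p.2 with hcst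
  have hg : ∀ p : ℕ × ℕ, HasSum (fun m => cst p * (A p.1 m * B m p.2))
      (cst p * matA (a ∘L b) p.1 p.2) := fun p =>
    (matA_comp_hasSum a b p.1 p.2).mul_left _
  have hLHS : pairSum (wt N (deltaK^[j] (matA (a ∘L b)))) x y
      = ∑ p ∈ y.support ×ˢ x.support, cst p * matA (a ∘L b) p.1 p.2 := by
    rw [pairSum, Finset.sum_product]
    apply Finset.sum_congr rfl; intro k _
    apply Finset.sum_congr rfl; intro l _
    simp only [wt, deltaK_iter, hcst]
    ring
  have heq2 : ∑ p ∈ y.support ×ˢ x.support, cst p * matA (a ∘L b) p.1 p.2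
      = ∑' m, ∑ p ∈ y.support ×ˢ x.support, cst p * (A p.1 m * B m p.2) := by
    rw [Summable.tsum_finsetSum fun p _ => (hg p).summable]
    exact Finset.sum_congr rfl fun p _ => ((hg p).tsum_eq).symm
  have hpt : ∀ m : ℕ, ∑ p ∈ y.support ×ˢ x.support, cst p * (A p.1 m * B m p.2)
      = ∑ i ∈ Finset.range (j + 1), (Nat.choose j i : ℂ) * (u i m * v (j - i) m) := by
    intro m
    have hterm : ∀ p ∈ y.support ×ˢ x.support, cst p * (A p.1 m * B m p.2)
        = ∑ i ∈ Finset.range (j + 1), (Nat.choose j i : ℂ) *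
          ((conj (y p.1) * (((p.1 : ℂ) - m) ^ i * A p.1 m)) *
            ((1 + (p.2 : ℂ)) ^ N * (((m : ℂ) - p.2) ^ (j - i) * B m p.2) * x p.2)) := by
      rintro ⟨k, l⟩ -
      have hadd : ((k : ℂ) - l) ^ j = ∑ i ∈ Finset.range (j + 1),
          ((k : ℂ) - m) ^ i * ((m : ℂ) - l) ^ (j - i) * (Nat.choose j i : ℂ) := by
        have h := add_pow ((k : ℂ) - m) ((m : ℂ) - l) j
        rw [show ((k : ℂ) - m) + ((m : ℂ) - l) = (k : ℂ) - l by ring] at h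
        exact h
      have e1 : cst (k, l) * (A k m * B m l)
          = (conj (y k) * (1 + (l : ℂ)) ^ N * x l * (A k m * B m l)) *
            ((k : ℂ) - l) ^ j := by rw [hcst]; ring
      rw [e1, hadd, Finset.mul_sum]
      apply Finset.sum_congr rfl; intro i _
      ring
    rw [Finset.sum_congr rfl hterm, Finset.sum_comm]
    apply Finset.sum_congr rfl; intro i _
    rw [← Finset.mul_sum, Finset.sum_product]
    congr 1
    rw [hu, hv]
    simp only
    rw [Finset.sum_mul_sum]
  have heq3 : (∑' m, ∑ p ∈ y.support ×ˢ x.support, cst p * (A p.1 m * B m p.2))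
      = ∑ i ∈ Finset.range (j + 1), (Nat.choose j i : ℂ) *
        ∑' m, u i m * v (j - i) m := by
    rw [tsum_congr hpt, Summable.tsum_finsetSum]
    · exact Finset.sum_congr rfl fun i _ => tsum_mul_left
    · intro i hi
      exact ((hcs i (Finset.mem_range_succ_iff.mp hi)).1).mul_left _
  -- real bound
  have hreal : ‖pairSum (wt N (deltaK^[j] (matA (a ∘L b)))) x y‖
      ≤ ∑ i ∈ Finset.range (j + 1), (Nat.choose j i : ℝ) * (Ci i * Di (j - i)) := by
    rw [hLHS, heq2, heq3]
    refine le_trans (norm_sum_le _ _) (Finset.sum_le_sum ?_)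
    intro i hi
    rw [norm_mul, Complex.norm_natCast]
    exact mul_le_mul_of_nonneg_left ((hcs i (Finset.mem_range_succ_iff.mp hi)).2)
      (Nat.cast_nonneg _)
  -- pass to ℝ≥0∞
  calc ENNReal.ofReal ‖pairSum (wt N (deltaK^[j] (matA (a ∘L b)))) x y‖
      ≤ ENNReal.ofReal (∑ i ∈ Finset.range (j + 1),
          (Nat.choose j i : ℝ) * (Ci i * Di (j - i))) := ENNReal.ofReal_le_ofReal hreal
    _ ≤ ∑ i ∈ Finset.range (j + 1), (Nat.choose j i : ℝ≥0∞) *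
        (norm0N (deltaK^[i] A) 0 * norm0N (deltaK^[j - i] B) N) := by
        rw [ENNReal.ofReal_sum_of_nonneg]
        · apply Finset.sum_le_sum
          intro i hi
          have hi' := Finset.mem_range_succ_iff.mp hi
          rw [ENNReal.ofReal_mul (Nat.cast_nonneg _),
            ENNReal.ofReal_mul ENNReal.toReal_nonneg, ENNReal.ofReal_natCast,
            show Di (j - i) = (norm0N (deltaK^[j - i] B) N).toReal from rfl,
            ENNReal.ofReal_toReal (hA i hi'),
            ENNReal.ofReal_toReal (hB (j - i) (Nat.sub_le j i))]
        · intro i _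
          positivity

lemma deltaK_zero_fun : deltaK (fun _ _ => (0 : ℂ)) = fun _ _ => 0 := by
  funext k l; simp [deltaK]

lemma normMN_zero (M N : ℕ) : normMN (fun _ _ => (0 : ℂ)) M N = 0 := by
  rw [normMN]
  apply Finset.sum_eq_zero
  intro j _
  rw [Function.iterate_fixed deltaK_zero_fun, norm0N,
    show wt N (fun _ _ => (0 : ℂ)) = fun _ _ => 0 by funext k l; simp [wt],
    opNormE_zero, mul_zero]

lemma mat_zero_of_normMN_eq_zero (A : ℕ → ℕ → ℂ) (M N : ℕ) (h : normMN A M N = 0) :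
    A = fun _ _ => 0 := by
  rw [normMN, Finset.sum_eq_zero_iff] at h
  have h0 := h 0 (Finset.mem_range.mpr (Nat.succ_pos M))
  rw [Nat.choose_zero_right, Nat.cast_one, one_mul, Function.iterate_zero, id_eq, norm0N] at h0
  funext k l
  have := mat_eq_zero_of_opNormE_zero _ h0 k l
  rw [wt] at this
  exact (mul_eq_zero.mp this).resolve_left (one_add_pow_ne l N)

lemma matA_comp_zero_left (a b : H →L[ℂ] H) (h : matA a = fun _ _ => 0) :
    matA (a ∘L b) = fun _ _ => 0 := by
  funext k l
  refine (matA_comp_hasSum a b k l).unique ?_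
  rw [h]
  simpa using hasSum_zero

lemma matA_comp_zero_right (a b : H →L[ℂ] H) (h : matA b = fun _ _ => 0) :
    matA (a ∘L b) = fun _ _ => 0 := by
  funext k l
  refine (matA_comp_hasSum a b k l).unique ?_
  rw [h]
  simpa using hasSum_zero

lemma normMN_finite_terms (A : ℕ → ℕ → ℂ) (M N : ℕ) (h : normMN A M N ≠ ⊤) :
    ∀ j, j ≤ M → norm0N (deltaK^[j] A) N ≠ ⊤ := by
  intro j hj
  intro htop
  apply h
  rw [normMN, ENNReal.sum_eq_top]
  refine ⟨j, Finset.mem_range_succ_iff.mpr hj, ?_⟩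
  rw [htop, ENNReal.mul_top]
  exact_mod_cast Nat.cast_ne_zero.mpr (Nat.choose_pos hj).ne'

/-- Submultiplicativity of the `M,N`-norms:
`‖ab‖_{M,N} ≤ ‖a‖_{M,0} ‖b‖_{M,N} ≤ ‖a‖_{M,N} ‖b‖_{M,N}`. -/
theorem stmt4 (a b : H →L[ℂ] H) (M N : ℕ) :
    normMN (matA (a ∘L b)) M N ≤ normMN (matA a) M 0 * normMN (matA b) M N ∧
    normMN (matA a) M 0 * normMN (matA b) M N ≤ normMN (matA a) M N * normMN (matA b) M N := by
  constructor
  · by_cases hA0 : normMN (matA a) M 0 = 0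
    · rw [matA_comp_zero_left a b (mat_zero_of_normMN_eq_zero _ M 0 hA0), normMN_zero]
      exact zero_le
    by_cases hB0 : normMN (matA b) M N = 0
    · rw [matA_comp_zero_right a b (mat_zero_of_normMN_eq_zero _ M N hB0), normMN_zero]
      exact zero_le
    by_cases hAt : normMN (matA a) M 0 = ⊤
    · rw [hAt, ENNReal.top_mul hB0]; exact le_top
    by_cases hBt : normMN (matA b) M N = ⊤
    · rw [hBt, ENNReal.mul_top hA0]; exact le_top
    · have hAfin := normMN_finite_terms _ M 0 hAt
      have hBfin := normMN_finite_terms _ M N hBt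
      calc normMN (matA (a ∘L b)) M N
          ≤ ∑ j ∈ Finset.range (M + 1), (Nat.choose M j : ℝ≥0∞) *
              ∑ i ∈ Finset.range (j + 1), (Nat.choose j i : ℝ≥0∞) *
                (norm0N (deltaK^[i] (matA a)) 0 * norm0N (deltaK^[j - i] (matA b)) N) := by
            rw [normMN]
            apply Finset.sum_le_sum
            intro j hj
            have hjM := Finset.mem_range_succ_iff.mp hj
            exact mul_le_mul_right (key_estimate a b j N
              (fun i hi => hAfin i (hi.trans hjM))
              (fun i hi => hBfin i (hi.trans hjM))) _
        _ ≤ normMN (matA a) M 0 * normMN (matA b) M N := by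
            rw [normMN, normMN]
            exact comb_rearrange M (fun i => norm0N (deltaK^[i] (matA a)) 0)
              (fun i => norm0N (deltaK^[i] (matA b)) N)
  · apply mul_le_mul_left
    rw [normMN, normMN]
    apply Finset.sum_le_sum
    intro j _
    apply mul_le_mul_right
    rw [norm0N, norm0N,
      show wt 0 (deltaK^[j] (matA a)) = deltaK^[j] (matA a) by funext k l; simp [wt]]
    exact opNormE_le_wt _ N

end
end

section
/- If c is a smooth compact operator (rapidly decaying matrix coefficients with respect to {E_k}) and I+c is invertible as a bounded operator on H, then (I+c)^{−1} − I is also a smooth compact operator. -/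
open scoped ENNReal ComplexConjugate InnerProductSpace

noncomputable section

/-- The summable majorant `∑ 1/(1+m)⁴`. -/
lemma aux_summable : Summable (fun m : ℕ => (1:ℝ) / (1 + (m:ℝ)) ^ 4) := by
  have h : Summable (fun n : ℕ => (1:ℝ) / (n:ℝ) ^ 4) :=
    Real.summable_one_div_nat_pow.mpr (by norm_num)
  have := (summable_nat_add_iff 1).mpr h
  refine this.congr fun n => ?_
  push_cast
  ring_nf

/-- Coordinates of an `ℓ²` vector are inner products against the basis. -/
lemma coord_eq (x : H) (m : ℕ) : ⟪e m, x⟫_ℂ = x m := by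
  rw [e, lp.inner_single_left]
  simp

/-- Norm bound from coordinatewise bounds. -/
lemma norm_le_aux (x : H) (D : ℝ) (hD : 0 ≤ D)
    (h : ∀ m : ℕ, ‖x m‖ ≤ D / (1 + (m:ℝ)) ^ 2) :
    ‖x‖ ≤ D * Real.sqrt (∑' m : ℕ, (1:ℝ) / (1 + (m:ℝ)) ^ 4) := by
  set S := ∑' m : ℕ, (1:ℝ) / (1 + (m:ℝ)) ^ 4 with hSdef
  have hS0 : 0 ≤ S := tsum_nonneg fun m => by positivity
  refine lp.norm_le_of_forall_sum_le (by norm_num) (by positivity) fun s => ?_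
  have h2 : ((2:ℝ≥0∞)).toReal = 2 := by norm_num
  have hrpow : ∀ a : ℝ, 0 ≤ a → a ^ ((2:ℝ≥0∞)).toReal = a ^ 2 := by
    intro a ha
    rw [h2, show (2:ℝ) = ((2:ℕ):ℝ) by norm_num, Real.rpow_natCast]
  calc ∑ i ∈ s, ‖x i‖ ^ ((2:ℝ≥0∞)).toReal
      = ∑ i ∈ s, ‖x i‖ ^ 2 := Finset.sum_congr rfl fun i _ => hrpow _ (norm_nonneg _)
    _ ≤ ∑ i ∈ s, (D / (1 + (i:ℝ)) ^ 2) ^ 2 := by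
        refine Finset.sum_le_sum fun i _ => ?_
        exact pow_le_pow_left₀ (norm_nonneg _) (h i) 2
    _ = ∑ i ∈ s, D ^ 2 * ((1:ℝ) / (1 + (i:ℝ)) ^ 4) := by
        refine Finset.sum_congr rfl fun i _ => ?_
        rw [div_pow, ← pow_mul]
        ring
    _ = D ^ 2 * ∑ i ∈ s, (1:ℝ) / (1 + (i:ℝ)) ^ 4 := by rw [Finset.mul_sum]
    _ ≤ D ^ 2 * S := by
        gcongr
        exact Summable.sum_le_tsum s (fun i _ => by positivity) aux_summable
    _ = (D * Real.sqrt S) ^ 2 := by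
        rw [mul_pow, Real.sq_sqrt hS0]
    _ = (D * Real.sqrt S) ^ ((2:ℝ≥0∞)).toReal := (hrpow _ (by positivity)).symm

/-- If `c` is a smooth compact operator and `I + c` is invertible in `B(H)`,
then `(I+c)⁻¹ - I` is a smooth compact operator. -/
theorem stmt7 (c : H →L[ℂ] H) (hc : IsRD (matA c))
    (b : H →L[ℂ] H) (hb1 : (1 + c) * b = 1) (hb2 : b * (1 + c) = 1) :
    IsRD (matA (b - 1)) := by
  -- key algebraic identity: b - 1 = c*b*c - c
  have h1 : c * b = 1 - b := by
    have h : b + c * b = 1 := by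
      have := hb1
      rw [add_mul, one_mul] at this
      exact this
    exact eq_sub_of_add_eq' h
  have h2 : b * c = 1 - b := by
    have h : b + b * c = 1 := by
      have := hb2
      rw [mul_add, mul_one] at this
      exact this
    exact eq_sub_of_add_eq' h
  have key : b - 1 = c * b * c - c := by
    have : c * b * c - c = b - 1 := by
      rw [h1, sub_mul, one_mul, h2]; abel
    exact this.symm
  intro M N
  obtain ⟨C1, hC1⟩ := hc M N
  obtain ⟨C2, hC2⟩ := hc 2 N
  obtain ⟨C3, hC3⟩ := hc M 2
  have hC2' : 0 ≤ C2 := le_trans (by positivity) (hC2 0 0)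
  have hC3' : 0 ≤ C3 := le_trans (by positivity) (hC3 0 0)
  set S := ∑' m : ℕ, (1:ℝ) / (1 + (m:ℝ)) ^ 4 with hSdef
  set sq := Real.sqrt S with hsqdef
  have hsq0 : 0 ≤ sq := Real.sqrt_nonneg _
  -- coordinates of c (e l) and (adjoint c) (e k)
  have hcoord1 : ∀ l m : ℕ, (c (e l)) m = matA c m l := by
    intro l m; rw [matA, coord_eq]
  have hcoord2 : ∀ k m : ℕ, ‖((ContinuousLinearMap.adjoint c) (e k)) m‖ = ‖matA c k m‖ := by
    intro k m
    rw [← coord_eq ((ContinuousLinearMap.adjoint c) (e k)) m,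
      ContinuousLinearMap.adjoint_inner_right]
    rw [matA, ← inner_conj_symm]
    exact norm_star _
  -- column norms decay
  have hl : ∀ l : ℕ, ‖c (e l)‖ ≤ C2 / (1 + (l:ℝ)) ^ N * sq := by
    intro l
    refine norm_le_aux _ _ (by positivity) fun m => ?_
    rw [hcoord1, div_div, le_div_iff₀ (by positivity)]
    calc ‖matA c m l‖ * ((1 + (l:ℝ)) ^ N * (1 + (m:ℝ)) ^ 2)
        = (1 + (m:ℝ)) ^ 2 * (1 + (l:ℝ)) ^ N * ‖matA c m l‖ := by ring
      _ ≤ C2 := hC2 m l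
  have hk : ∀ k : ℕ, ‖(ContinuousLinearMap.adjoint c) (e k)‖ ≤ C3 / (1 + (k:ℝ)) ^ M * sq := by
    intro k
    refine norm_le_aux _ _ (by positivity) fun m => ?_
    rw [hcoord2, div_div, le_div_iff₀ (by positivity)]
    calc ‖matA c k m‖ * ((1 + (k:ℝ)) ^ M * (1 + (m:ℝ)) ^ 2)
        = (1 + (k:ℝ)) ^ M * (1 + (m:ℝ)) ^ 2 * ‖matA c k m‖ := by ring
      _ ≤ C3 := hC3 k m
  refine ⟨C1 + C3 * sq * (‖b‖ * (C2 * sq)), fun k l => ?_⟩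
  set u := (ContinuousLinearMap.adjoint c) (e k) with hu
  set v := c (e l) with hv
  have hA : matA (b - 1) k l = ⟪u, b v⟫_ℂ - matA c k l := by
    rw [matA, key]
    simp only [ContinuousLinearMap.sub_apply, ContinuousLinearMap.mul_apply, inner_sub_right]
    rw [ContinuousLinearMap.adjoint_inner_left]
    rfl
  have hin : ‖⟪u, b v⟫_ℂ‖ ≤ ‖u‖ * (‖b‖ * ‖v‖) := by
    refine (norm_inner_le_norm _ _).trans ?_
    gcongr
    exact b.le_opNorm _
  have h0 : ‖matA (b - 1) k l‖ ≤ ‖⟪u, b v⟫_ℂ‖ + ‖matA c k l‖ := by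
    rw [hA]; exact norm_sub_le _ _
  have hkpos : (0:ℝ) < (1 + (k:ℝ)) ^ M := by positivity
  have hlpos : (0:ℝ) < (1 + (l:ℝ)) ^ N := by positivity
  have e1 : (1 + (k:ℝ)) ^ M * ‖u‖ ≤ C3 * sq := by
    have := hk k
    calc (1 + (k:ℝ)) ^ M * ‖u‖ ≤ (1 + (k:ℝ)) ^ M * (C3 / (1 + (k:ℝ)) ^ M * sq) := by
          gcongr
      _ = C3 * sq := by field_simp
  have e2 : (1 + (l:ℝ)) ^ N * ‖v‖ ≤ C2 * sq := by
    have := hl l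
    calc (1 + (l:ℝ)) ^ N * ‖v‖ ≤ (1 + (l:ℝ)) ^ N * (C2 / (1 + (l:ℝ)) ^ N * sq) := by
          gcongr
      _ = C2 * sq := by field_simp
  have t1 : (1 + (k:ℝ)) ^ M * (1 + (l:ℝ)) ^ N * ‖⟪u, b v⟫_ℂ‖
      ≤ ((1 + (k:ℝ)) ^ M * ‖u‖) * (‖b‖ * ((1 + (l:ℝ)) ^ N * ‖v‖)) := by
    calc (1 + (k:ℝ)) ^ M * (1 + (l:ℝ)) ^ N * ‖⟪u, b v⟫_ℂ‖
        ≤ (1 + (k:ℝ)) ^ M * (1 + (l:ℝ)) ^ N * (‖u‖ * (‖b‖ * ‖v‖)) := by gcongr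
      _ = ((1 + (k:ℝ)) ^ M * ‖u‖) * (‖b‖ * ((1 + (l:ℝ)) ^ N * ‖v‖)) := by ring
  have t2 : ((1 + (k:ℝ)) ^ M * ‖u‖) * (‖b‖ * ((1 + (l:ℝ)) ^ N * ‖v‖))
      ≤ C3 * sq * (‖b‖ * (C2 * sq)) := by
    have hb0 : (0:ℝ) ≤ ‖b‖ := norm_nonneg _
    refine mul_le_mul e1 (mul_le_mul_of_nonneg_left e2 hb0) (by positivity) (by positivity)
  have t3 : (1 + (k:ℝ)) ^ M * (1 + (l:ℝ)) ^ N * ‖matA c k l‖ ≤ C1 := hC1 k l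
  calc (1 + (k:ℝ)) ^ M * (1 + (l:ℝ)) ^ N * ‖matA (b - 1) k l‖
      ≤ (1 + (k:ℝ)) ^ M * (1 + (l:ℝ)) ^ N * (‖⟪u, b v⟫_ℂ‖ + ‖matA c k l‖) := by
        gcongr
    _ = (1 + (k:ℝ)) ^ M * (1 + (l:ℝ)) ^ N * ‖matA c k l‖
        + (1 + (k:ℝ)) ^ M * (1 + (l:ℝ)) ^ N * ‖⟪u, b v⟫_ℂ‖ := by ring
    _ ≤ C1 + C3 * sq * (‖b‖ * (C2 * sq)) := by
        have := t1.trans t2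
        linarith

end
end

section
/- If c ∈ K^∞ is self-adjoint, then ‖(e^{ic} − I)(I+K)^N‖ ≤ ‖c(I+K)^N‖ for every nonnegative integer N. -/
open scoped ENNReal ComplexConjugate InnerProductSpace

noncomputable section

open NormedSpace intervalIntegral in
set_option maxHeartbeats 1000000 in
set_option synthInstance.maxHeartbeats 400000 in
private lemma factorization9 (c : H →L[ℂ] H) (hsa : IsSelfAdjoint c) :
    ∃ d : H →L[ℂ] H, ‖d‖ ≤ 1 ∧ exp (Complex.I • c) - 1 = d * c := by
  set x : H →L[ℂ] H := Complex.I • c with hx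
  let +nondep : NormedAlgebra ℚ (H →L[ℂ] H) := NormedAlgebra.restrictScalars ℚ ℂ (H →L[ℂ] H)
  have hskew : ∀ t : ℝ, t • x ∈ skewAdjoint (H →L[ℂ] H) := by
    intro t
    rw [skewAdjoint.mem_iff]
    rw [hx, RCLike.real_smul_eq_coe_smul (K := ℂ)]
    rw [star_smul, star_smul]
    rw [hsa.star_eq]
    simp [smul_smul, Complex.conj_I]
  haveI : Nontrivial H := ⟨⟨lp.single 2 0 1, 0, by
    intro h
    have := congrArg (fun f : H => f 0) h
    simp [lp.single_apply] at this⟩⟩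
  have hunit : ∀ t : ℝ, ‖exp (t • x)‖ = 1 := fun t =>
    CStarRing.norm_of_mem_unitary (exp_mem_unitary_of_mem_skewAdjoint (hskew t))
  have hderiv : ∀ t ∈ Set.uIcc (0:ℝ) 1, HasDerivAt (fun u : ℝ => exp (u • x))
      (exp (t • x) * x) t := fun t _ => hasDerivAt_exp_smul_const x t
  have hcont : Continuous fun t : ℝ => exp (t • x) * x :=
    ((exp_continuous.comp (continuous_id.smul continuous_const))).mul continuous_const
  have hint : IntervalIntegrable (fun t : ℝ => exp (t • x) * x) MeasureTheory.volume 0 1 :=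
    hcont.intervalIntegrable 0 1
  have hFTC : ∫ t in (0:ℝ)..1, exp (t • x) * x = exp ((1:ℝ) • x) - exp ((0:ℝ) • x) :=
    integral_eq_sub_of_hasDerivAt hderiv hint
  set E : H →L[ℂ] H := ∫ t in (0:ℝ)..1, exp (t • x)
  have hE : ∫ t in (0:ℝ)..1, exp (t • x) * x = E * x := by
    have := (ContinuousLinearMap.mul ℂ (H →L[ℂ] H)).flip x |>.intervalIntegral_comp_comm
      ((exp_continuous.comp (continuous_id.smul continuous_const)).intervalIntegrable 0 1 :
        IntervalIntegrable (fun t : ℝ => exp (t • x)) MeasureTheory.volume 0 1)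
    simpa using this
  have hEnorm : ‖E‖ ≤ 1 := by
    have := intervalIntegral.norm_integral_le_of_norm_le_const
      (C := 1) (f := fun t : ℝ => exp (t • x)) (a := 0) (b := 1)
      (fun t _ => le_of_eq (hunit t))
    simpa using this
  refine ⟨Complex.I • E, ?_, ?_⟩
  · refine (_root_.norm_smul_le Complex.I E).trans ?_
    rw [Complex.norm_I, one_mul]
    exact hEnorm
  · have h1 : exp (Complex.I • c) - 1 = E * x := by
      rw [← hE, hFTC]
      simp [hx]
    rw [h1, hx]
    rw [mul_smul_comm, smul_mul_assoc]

set_option maxHeartbeats 1000000 in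
private lemma coord_eq_inner (f : H) (k : ℕ) : ⟪e k, f⟫_ℂ = f k := by
  rw [e, lp.inner_single_left, RCLike.inner_apply, map_one, mul_one]

private lemma orthonormal_e : Orthonormal ℂ e := by
  rw [orthonormal_iff_ite]
  intro i j
  rw [coord_eq_inner]
  by_cases h : i = j
  · subst h; simp [e, lp.single_apply_self]
  · simp [e, lp.single_apply, Ne.symm h, h]

private lemma key9 (d a : H →L[ℂ] H) (hd : ‖d‖ ≤ 1) (N : ℕ) :
    opNormE (wt N (matA (d * a))) ≤ opNormE (wt N (matA a)) := by
  refine iSup_le fun x => iSup_le fun y => iSup_le fun hx => iSup_le fun hy => ?_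
  classical
  set X : H := ∑ l ∈ x.support, ((1 + (l : ℂ)) ^ N * x l) • e l with hX
  set Y : H := ∑ k ∈ y.support, (y k) • e k with hY
  -- inner sum identity for any operator b
  have inner_sum_eq : ∀ (b : H →L[ℂ] H) (k : ℕ),
      ∑ l ∈ x.support, wt N (matA b) k l * x l = ⟪e k, b X⟫_ℂ := by
    intro b k
    rw [hX, map_sum, inner_sum]
    refine Finset.sum_congr rfl fun l _ => ?_
    rw [map_smul, inner_smul_right, wt, matA]
    ring
  -- the pairing equals ⟪Y, b X⟫
  have pairing_eq : ∀ b : H →L[ℂ] H,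
      ∑ k ∈ y.support, ∑ l ∈ x.support, conj (y k) * wt N (matA b) k l * x l
        = ⟪Y, b X⟫_ℂ := by
    intro b
    rw [hY, sum_inner]
    refine Finset.sum_congr rfl fun k _ => ?_
    rw [inner_smul_left, ← inner_sum_eq b k, Finset.mul_sum]
    exact Finset.sum_congr rfl fun l _ => by ring
  set z : H := ContinuousLinearMap.adjoint d Y with hz
  have hYnorm : ‖Y‖ ≤ 1 := by
    have h2 : ‖Y‖ ^ 2 ≤ 1 := by
      rw [← inner_self_eq_norm_sq (𝕜 := ℂ), hY, orthonormal_e.inner_sum]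
      calc Complex.re (∑ k ∈ y.support, conj (y k) * y k)
          = ∑ k ∈ y.support, ‖y k‖ ^ 2 := by
            rw [Complex.re_sum]
            exact Finset.sum_congr rfl fun k _ => by
              rw [mul_comm, Complex.mul_conj']
              simp [Complex.normSq_eq_norm_sq, ← Complex.sq_norm,
                ← Complex.ofReal_pow]
        _ ≤ 1 := hy
    nlinarith [norm_nonneg Y]
  have hznorm : ‖z‖ ≤ 1 := by
    calc ‖z‖ ≤ ‖ContinuousLinearMap.adjoint d‖ * ‖Y‖ := (ContinuousLinearMap.adjoint d).le_opNorm Y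
      _ = ‖d‖ * ‖Y‖ := by rw [LinearIsometryEquiv.norm_map]
      _ ≤ 1 * 1 := mul_le_mul hd hYnorm (norm_nonneg _) zero_le_one
      _ = 1 := one_mul 1
  have hZA : ⟪Y, (d * a) X⟫_ℂ = ⟪z, a X⟫_ℂ := by
    rw [hz, ContinuousLinearMap.adjoint_inner_left]
    rfl
  have hSum : HasSum (fun k => conj (z k) * (a X : H) k) ⟪z, a X⟫_ℂ := by
    have := lp.hasSum_inner (𝕜 := ℂ) z (a X)
    simpa [RCLike.inner_apply, mul_comm] using this
  rw [pairing_eq, hZA]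
  -- approximate by finite partial sums
  have hT : Filter.Tendsto (fun F : Finset ℕ => ∑ k ∈ F, conj (z k) * (a X : H) k)
      Filter.atTop (nhds ⟪z, a X⟫_ℂ) := hSum
  have hTend : Filter.Tendsto
      (fun F : Finset ℕ => ENNReal.ofReal ‖∑ k ∈ F, conj (z k) * (a X : H) k‖)
      Filter.atTop (nhds (ENNReal.ofReal ‖⟪z, a X⟫_ℂ‖)) :=
    (ENNReal.continuous_ofReal.tendsto _).comp hT.norm
  refine le_of_tendsto hTend (Filter.Eventually.of_forall fun F => ?_)
  -- build the finitely supported truncation of z on F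
  set zF : ℕ →₀ ℂ := Finsupp.onFinset F (fun k => if k ∈ F then z k else 0)
    (fun k h => by by_contra hk; simp [hk] at h) with hzF
  have hzF_apply : ∀ k ∈ F, zF k = z k := fun k hk => by simp [hzF, hk]
  have hzF_supp : zF.support ⊆ F := Finsupp.support_onFinset_subset
  have hzF_le : ∑ k ∈ zF.support, ‖zF k‖ ^ 2 ≤ 1 := by
    have h1 : ∑ k ∈ zF.support, ‖zF k‖ ^ 2 ≤ ∑ k ∈ F, ‖z k‖ ^ 2 := by
      calc ∑ k ∈ zF.support, ‖zF k‖ ^ 2 = ∑ k ∈ zF.support, ‖z k‖ ^ 2 :=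
            Finset.sum_congr rfl fun k hk => by rw [hzF_apply k (hzF_supp hk)]
        _ ≤ ∑ k ∈ F, ‖z k‖ ^ 2 :=
            Finset.sum_le_sum_of_subset_of_nonneg hzF_supp
              (fun k _ _ => by positivity)
    refine h1.trans ?_
    have h2 := lp.sum_rpow_le_norm_rpow (p := 2) (by norm_num) z F
    have h3 : ∑ k ∈ F, ‖z k‖ ^ 2 ≤ ‖z‖ ^ 2 := by
      have e2 : ((2 : ℝ≥0∞)).toReal = (2 : ℝ) := by norm_num
      rw [e2] at h2
      simpa [Real.rpow_natCast] using h2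
    refine h3.trans ?_
    nlinarith [norm_nonneg z, hznorm]
  -- the partial sum equals the opNormE pairing for (x, zF)
  have hpair : ∑ k ∈ zF.support, ∑ l ∈ x.support, conj (zF k) * wt N (matA a) k l * x l
      = ∑ k ∈ F, conj (z k) * (a X : H) k := by
    rw [Finset.sum_subset hzF_supp]
    · refine Finset.sum_congr rfl fun k hk => ?_
      rw [← coord_eq_inner (a X) k, ← inner_sum_eq a k, Finset.mul_sum]
      refine Finset.sum_congr rfl fun l _ => ?_
      rw [hzF_apply k hk]
      ring
    · intro k _ hk
      have : zF k = 0 := Finsupp.notMem_support_iff.mp hk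
      simp [this]
  rw [← hpair]
  exact le_iSup_of_le x <| le_iSup_of_le zF <| le_iSup_of_le hx <| le_iSup_of_le hzF_le le_rfl


/-- For a self-adjoint smooth compact operator `c`:
`‖(e^{ic} - I)(I+K)^N‖ ≤ ‖c(I+K)^N‖`. -/

theorem stmt9 (c : H →L[ℂ] H) (hc : IsRD (matA c)) (hsa : IsSelfAdjoint c) (N : ℕ) :
    norm0N (matA (NormedSpace.exp (Complex.I • c) - 1)) N ≤ norm0N (matA c) N := by
  obtain ⟨d, hd, hfac⟩ := factorization9 c hsa
  rw [norm0N, norm0N, hfac]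
  exact key9 d c hd N

end
end

section
/- With g ∈ SU(1,1) as above and W_g := (αU + β)(β̄U + ᾱ)^{−1}, the operator W_g is an isometry: W_g* W_g = I. Moreover the kernel of W_g* is one-dimensional, spanned by the unit vector F₀ = Σ_{k≥0} (−β̄)^k / (ᾱ)^{k+1} E_k = (ᾱ + β̄U)^{−1} E₀. -/
open scoped ENNReal ComplexConjugate InnerProductSpace

noncomputable section

lemma coord (v : H) (n : ℕ) : ⟪e n, v⟫_ℂ = v n := by
  rw [e, lp.inner_single_left]; simp [RCLike.inner_apply]

lemma star_apply_coord (A : H →L[ℂ] H) (v : H) (n : ℕ) :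
    ((star A) v) n = ⟪A (e n), v⟫_ℂ := by
  rw [ContinuousLinearMap.star_eq_adjoint, ← ContinuousLinearMap.adjoint_inner_right, coord]

lemma e_apply (k n : ℕ) : (e k) n = if n = k then 1 else 0 := by
  rcases eq_or_ne n k with h | h
  · simp [e, h, lp.single_apply_self]
  · simp [e, h, lp.single_apply_ne _ _ _ h]

set_option maxHeartbeats 1600000 in
/-- For `g ∈ SU(1,1)` and `W_g = (αU + β)(β̄U + ᾱ)⁻¹`: `W_g` is an isometry,
`W_g* W_g = I`, and the kernel of `W_g*` is one-dimensional, spanned by the unit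
vector `F₀ = ∑_k (-β̄)^k / ᾱ^{k+1} E_k = (ᾱ + β̄U)⁻¹ E₀`. -/
theorem stmt18 (U : H →L[ℂ] H) (hU : ∀ k : ℕ, U (e k) = e (k + 1))
    (α β : ℂ) (hg : ‖α‖ ^ 2 - ‖β‖ ^ 2 = 1)
    (V : H →L[ℂ] H)
    (hV1 : (conj β • U + conj α • (1 : H →L[ℂ] H)) * V = 1)
    (hV2 : V * (conj β • U + conj α • (1 : H →L[ℂ] H)) = 1) :
    star ((α • U + β • (1 : H →L[ℂ] H)) * V) * ((α • U + β • (1 : H →L[ℂ] H)) * V) = 1 ∧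
    V (e 0) = ∑' k : ℕ, ((-(conj β)) ^ k / (conj α) ^ (k + 1)) • e k ∧
    ‖V (e 0)‖ = 1 ∧
    LinearMap.ker ((star ((α • U + β • (1 : H →L[ℂ] H)) * V) : H →L[ℂ] H) : H →ₗ[ℂ] H) =
      Submodule.span ℂ {V (e 0)} := by
  -- scalar facts
  have hα2 : ‖α‖ ^ 2 = 1 + ‖β‖ ^ 2 := by linarith
  have hαpos : (0:ℝ) < ‖α‖ ^ 2 := by nlinarith [sq_nonneg ‖β‖]
  have hα0 : α ≠ 0 := by
    intro h; rw [h] at hαpos; simp at hαpos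
  have ha0 : conj α ≠ 0 := by simpa using hα0
  -- the action of star U on coordinates
  have hUs : ∀ (v : H) (n : ℕ), ((star U) v) n = v (n + 1) := by
    intro v n
    rw [star_apply_coord, hU, coord]
  have hUse0 : (star U) (e 0) = 0 := by
    apply lp.ext; funext m
    rw [hUs]
    simp [e_apply]
  have hUseS : ∀ n : ℕ, (star U) (e (n + 1)) = e n := by
    intro n
    apply lp.ext; funext m
    rw [hUs]
    simp [e_apply]
  -- coordinates of U x
  have hUS : ∀ (x : H) (n : ℕ), (U x) (n + 1) = x n := by
    intro x n
    rw [← coord, ← ContinuousLinearMap.adjoint_inner_left, ← ContinuousLinearMap.star_eq_adjoint,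
      hUseS, coord]
  have hU0 : ∀ x : H, (U x) 0 = 0 := by
    intro x
    rw [← coord, ← ContinuousLinearMap.adjoint_inner_left, ← ContinuousLinearMap.star_eq_adjoint,
      hUse0, inner_zero_left]
  -- U is an isometry: star U * U = 1
  have hUU : star U * U = 1 := by
    ext x n
    simp only [ContinuousLinearMap.mul_apply, ContinuousLinearMap.one_apply, hUs, hUS]
  -- abbreviations
  set T : H →L[ℂ] H := conj β • U + conj α • (1 : H →L[ℂ] H) with hT
  set P : H →L[ℂ] H := α • U + β • (1 : H →L[ℂ] H) with hP
  -- the isometry claim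
  have hiso : star (P * V) * (P * V) = 1 := by
    have key : star P * P = star T * T := by
      rw [hP, hT]
      simp only [star_add, star_smul, star_one, add_mul, mul_add, smul_mul_assoc,
        mul_smul_comm, smul_smul, hUU, mul_one, one_mul, Complex.star_def, Complex.conj_conj]
      module
    calc star (P * V) * (P * V) = star V * ((star P * P) * V) := by
            rw [star_mul, mul_assoc, ← mul_assoc (star P) P V]
      _ = star V * (star T * (T * V)) := by rw [key, mul_assoc]
      _ = star (T * V) * (T * V) := by rw [← mul_assoc, ← star_mul]
      _ = 1 := by rw [hV1, star_one, one_mul]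
  -- the vector F
  set c : ℕ → ℂ := fun k => (-(conj β)) ^ k / (conj α) ^ (k + 1) with hc
  have hrec : ∀ k : ℕ, conj α * c (k + 1) = -(conj β * c k) := by
    intro k
    rw [hc]
    field_simp
    ring
  have hcnorm : ∀ k : ℕ, ‖c k‖ ^ 2 = (‖β‖ ^ 2 / ‖α‖ ^ 2) ^ k * (1 / ‖α‖ ^ 2) := by
    intro k
    have h1 : ‖c k‖ = ‖β‖ ^ k / ‖α‖ ^ (k + 1) := by
      simp [hc, norm_div, norm_pow]
    have hαne : ‖α‖ ≠ 0 := norm_ne_zero_iff.mpr hα0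
    rw [h1]
    field_simp
    ring_nf; rw [mul_assoc, ← mul_pow, mul_inv_cancel₀ hαne, one_pow, mul_one]
  have hrlt : ‖β‖ ^ 2 / ‖α‖ ^ 2 < 1 := by
    rw [div_lt_one hαpos]; linarith
  have hrnn : (0:ℝ) ≤ ‖β‖ ^ 2 / ‖α‖ ^ 2 := by positivity
  have hsummable : Summable fun k : ℕ => ‖c k‖ ^ (2:ℝ≥0∞).toReal := by
    have : Summable fun k : ℕ => (‖β‖ ^ 2 / ‖α‖ ^ 2) ^ k * (1 / ‖α‖ ^ 2) :=
      (summable_geometric_of_lt_one hrnn hrlt).mul_right _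
    refine this.congr fun k => ?_
    rw [show ((2:ℝ≥0∞).toReal) = (2:ℕ) by norm_num, Real.rpow_natCast, ← hcnorm k]
  have hmem : Memℓp c 2 := memℓp_gen hsummable
  set F : H := ⟨c, hmem⟩ with hF
  have hFk : ∀ k, F k = c k := fun k => rfl
  -- F as a tsum
  have hsum : HasSum (fun k : ℕ => c k • e k) F := by
    have := lp.hasSum_single (E := fun _ : ℕ => ℂ) ENNReal.ofNat_ne_top F
    refine this.congr_fun fun k => ?_
    rw [hFk, e, ← lp.single_smul, smul_eq_mul, mul_one]
  have htsum : (∑' k : ℕ, c k • e k) = F := hsum.tsum_eq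
  -- T F = e 0
  have hTF : T F = e 0 := by
    apply lp.ext; funext n
    have : (T F) n = conj β * (U F) n + conj α * F n := by
      rw [hT]
      simp [ContinuousLinearMap.add_apply, ContinuousLinearMap.smul_apply,
        ContinuousLinearMap.one_apply]
      rfl
    rw [this]
    cases n with
    | zero =>
      rw [hU0, hFk]
      simp [e_apply, hc]
      field_simp
    | succ m =>
      rw [hUS, hFk, hFk, hrec m]
      simp [e_apply]
  have hVe0 : V (e 0) = F := by
    have h1 : (V * T) F = F := by rw [hV2, ContinuousLinearMap.one_apply]
    rw [← hTF, ← ContinuousLinearMap.mul_apply, h1]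
  -- norm of F
  have hnorm : ‖F‖ = 1 := by
    have hp : (0:ℝ) < (2:ℝ≥0∞).toReal := by norm_num
    rw [lp.norm_eq_tsum_rpow hp F]
    have h1 : (∑' k : ℕ, ‖F k‖ ^ (2:ℝ≥0∞).toReal) = 1 := by
      have heq : ∀ k : ℕ, ‖F k‖ ^ (2:ℝ≥0∞).toReal
          = (‖β‖ ^ 2 / ‖α‖ ^ 2) ^ k * (1 / ‖α‖ ^ 2) := by
        intro k
        rw [hFk, show ((2:ℝ≥0∞).toReal) = (2:ℕ) by norm_num, Real.rpow_natCast, hcnorm k]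
      rw [tsum_congr heq, tsum_mul_right, tsum_geometric_of_lt_one hrnn hrlt]
      have h2 : 1 - ‖β‖ ^ 2 / ‖α‖ ^ 2 = 1 / ‖α‖ ^ 2 := by
        rw [eq_div_iff hαpos.ne', sub_mul, one_mul, div_mul_cancel₀ _ hαpos.ne']
        exact hg
      rw [h2]
      exact inv_mul_cancel₀ (by positivity)
    rw [h1, Real.one_rpow]
  -- kernel of star (P * V) equals kernel of star P
  have hsTV : star T * star V = 1 := by
    rw [← star_mul, hV2, star_one]
  have happly : ∀ x : H, (star (P * V)) x = (star V) ((star P) x) := by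
    intro x
    rw [star_mul, ContinuousLinearMap.mul_apply]
  have hkermem : ∀ x : H, (star (P * V)) x = 0 ↔ (star P) x = 0 := by
    intro x
    constructor
    · intro h
      have h3 : (star V) ((star P) x) = 0 := by rw [← happly x, h]
      have h4 : (star T) ((star V) ((star P) x)) = (star P) x := by
        rw [← ContinuousLinearMap.mul_apply, hsTV, ContinuousLinearMap.one_apply]
      rw [← h4, h3, map_zero]
    · intro h
      rw [happly, h, map_zero]
  -- coordinates of star P
  have hPx : ∀ (x : H) (n : ℕ), ((star P) x) n = conj α * x (n + 1) + conj β * x n := by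
    intro x n
    rw [star_apply_coord, hP]
    have : (α • U + β • (1 : H →L[ℂ] H)) (e n) = α • e (n + 1) + β • e n := by
      simp [ContinuousLinearMap.add_apply, ContinuousLinearMap.smul_apply,
        ContinuousLinearMap.one_apply, hU]
    rw [this, inner_add_left, inner_smul_left, inner_smul_left, coord, coord]
  -- F is in the kernel of star P
  have hFker : (star P) F = 0 := by
    apply lp.ext; funext n
    rw [hPx, hFk, hFk, hrec n]
    simp
  -- kernel of star P is spanned by F
  have hker : LinearMap.ker ((star (P * V) : H →L[ℂ] H) : H →ₗ[ℂ] H) = Submodule.span ℂ {F} := by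
    apply le_antisymm
    · intro x hx
      rw [LinearMap.mem_ker, ContinuousLinearMap.coe_coe] at hx
      rw [hkermem] at hx
      have hxrec : ∀ n : ℕ, conj α * x (n + 1) + conj β * x n = 0 := by
        intro n
        rw [← hPx, hx]
        rfl
      have hxn : ∀ n : ℕ, x n = (conj α * x 0) * c n := by
        intro n
        induction n with
        | zero =>
          rw [hc]; field_simp; ring
        | succ m ih =>
          have h1 := hxrec m
          have h2 := hrec m
          have : conj α * x (m + 1) = conj α * ((conj α * x 0) * c (m + 1)) := by
            have : conj α * x (m + 1) = -(conj β * x m) := by linear_combination h1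
            rw [this, ih]
            linear_combination (conj α * x 0) * h2.symm
          exact mul_left_cancel₀ ha0 this
      rw [Submodule.mem_span_singleton]
      refine ⟨conj α * x 0, ?_⟩
      apply lp.ext; funext n
      rw [lp.coeFn_smul, Pi.smul_apply, hFk, smul_eq_mul, ← hxn]
    · rw [Submodule.span_le, Set.singleton_subset_iff]
      rw [SetLike.mem_coe, LinearMap.mem_ker, ContinuousLinearMap.coe_coe, hkermem]
      exact hFker
  refine ⟨hiso, ?_, ?_, ?_⟩
  · rw [hVe0, ← htsum]
  · rw [hVe0, hnorm]
  · rw [hVe0, hker]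

end
end
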